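/- arXiv:2108.07970 — 2 statements merged into one kernel-verified Lean document; each statement's English description precedes it below -/
import Mathlib

section
/- Let M be an n×n real matrix, λ ∈ ℝ and v ∈ ℝⁿ with M v = λ v. Let A, D be d_x×d_x real matrices, B, E be d_x×d_u real matrices, and let x, w ∈ ℝ^{d_x×n}, u ∈ ℝ^{d_u×n} be matrices satisfying x⁺ = A x + B u + D x M + E u M + w. Then x⁺ v vᵀ = (A + λ D)(x v vᵀ) + (B + λ E)(u v vᵀ) + w v vᵀ. -/
open Matrix

/-- **Eigenstate dynamics.** If `M v = λ v` and the global state evolves as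
`x⁺ = A x + B u + D x M + E u M + w`, then the eigenstate `x v vᵀ` evolves as
`x⁺ v vᵀ = (A + λ D)(x v vᵀ) + (B + λ E)(u v vᵀ) + w v vᵀ`. -/
theorem eigenstate_dynamics
    {n dx du : ℕ}
    (M : Matrix (Fin n) (Fin n) ℝ) (lam : ℝ) (v : Fin n → ℝ)
    (hv : M.mulVec v = lam • v)
    (A D : Matrix (Fin dx) (Fin dx) ℝ) (B E : Matrix (Fin dx) (Fin du) ℝ)
    (x xp w : Matrix (Fin dx) (Fin n) ℝ) (u : Matrix (Fin du) (Fin n) ℝ)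
    (hdyn : xp = A * x + B * u + D * (x * M) + E * (u * M) + w) :
    xp * vecMulVec v v =
      (A + lam • D) * (x * vecMulVec v v) + (B + lam • E) * (u * vecMulVec v v)
        + w * vecMulVec v v := by
  have key : M * vecMulVec v v = lam • vecMulVec v v := by
    ext i j
    have h := congrFun hv i
    simp only [mulVec, dotProduct, Pi.smul_apply, smul_eq_mul] at h
    simp only [mul_apply, vecMulVec_apply, Matrix.smul_apply, smul_eq_mul]
    calc ∑ k, M i k * (v k * v j) = (∑ k, M i k * v k) * v j := by
          rw [Finset.sum_mul]; exact Finset.sum_congr rfl fun k _ => by ring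
      _ = lam * (v i * v j) := by rw [h]; ring
  subst hdyn
  simp only [Matrix.add_mul, Matrix.mul_assoc, key, Matrix.mul_smul, Matrix.smul_mul]
  abel
end

section
/- Let v¹, …, vᴸ ∈ ℝⁿ be orthonormal vectors, let λ¹, …, λᴸ be real numbers, let M = Σ_{l=1}^{L} λˡ vˡ (vˡ)ᵀ, and let P = Σ_{l=1}^{L} vˡ (vˡ)ᵀ. Let A, D be d_x×d_x real matrices, B, E be d_x×d_u real matrices, and let x, w ∈ ℝ^{d_x×n}, u ∈ ℝ^{d_u×n} satisfy x⁺ = A x + B u + D x M + E u M + w. Then M(I − P) = 0 and x⁺(I − P) = A x(I − P) + B u(I − P) + w(I − P); that is, the auxiliary state x̆ = x(I − P) evolves as x̆⁺ = A x̆ + B ŭ + w̆ with ŭ = u(I − P) and w̆ = w(I − P). -/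
open Matrix

lemma vecMulVec_mul_vecMulVec' {n m p : ℕ} (a : Fin m → ℝ) (b c : Fin n → ℝ)
    (d : Fin p → ℝ) :
    vecMulVec a b * vecMulVec c d = (b ⬝ᵥ c) • vecMulVec a d := by
  ext i j
  simp [mul_apply, vecMulVec_apply, dotProduct, Finset.sum_mul, Finset.mul_sum]
  congr 1; ext k; ring

/-- **Auxiliary state dynamics.** For orthonormal `v¹, …, vᴸ`, coupling matrix
`M = ∑ l, λˡ vˡ (vˡ)ᵀ` and projection `P = ∑ l, vˡ (vˡ)ᵀ`, if the global state evolves as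
`x⁺ = A x + B u + D x M + E u M + w` then `M (I - P) = 0` and the auxiliary state
`x̆ = x (I - P)` evolves as `x̆⁺ = A x̆ + B ŭ + w̆`. -/
theorem auxiliary_state_dynamics
    {n L dx du : ℕ}
    (v : Fin L → (Fin n → ℝ))
    (horth : ∀ k l, v k ⬝ᵥ v l = if k = l then (1 : ℝ) else 0)
    (lam : Fin L → ℝ)
    (M P : Matrix (Fin n) (Fin n) ℝ)
    (hM : M = ∑ l : Fin L, lam l • vecMulVec (v l) (v l))
    (hP : P = ∑ l : Fin L, vecMulVec (v l) (v l))
    (A D : Matrix (Fin dx) (Fin dx) ℝ) (B E : Matrix (Fin dx) (Fin du) ℝ)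
    (x xp w : Matrix (Fin dx) (Fin n) ℝ) (u : Matrix (Fin du) (Fin n) ℝ)
    (hdyn : xp = A * x + B * u + D * (x * M) + E * (u * M) + w) :
    M * (1 - P) = 0 ∧
    xp * (1 - P) = A * (x * (1 - P)) + B * (u * (1 - P)) + w * (1 - P) := by
  have hMP : M * P = M := by
    subst hM hP
    rw [Finset.sum_mul]
    refine Finset.sum_congr rfl fun k _ => ?_
    rw [Finset.mul_sum]
    rw [Finset.sum_eq_single k]
    · rw [smul_mul_assoc, vecMulVec_mul_vecMulVec', horth, if_pos rfl, one_smul]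
    · intro l _ hl
      rw [smul_mul_assoc, vecMulVec_mul_vecMulVec', horth, if_neg (Ne.symm hl),
        zero_smul, smul_zero]
    · intro h; exact absurd (Finset.mem_univ k) h
  have hM0 : M * (1 - P) = 0 := by
    rw [mul_sub, mul_one, hMP, sub_self]
  refine ⟨hM0, ?_⟩
  subst hdyn
  simp only [Matrix.add_mul, Matrix.mul_assoc, hM0, Matrix.mul_zero, add_zero]
end
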